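/- Let m ≥ 3 and let B be a blocker in CK(2m) such that e = {2m−3, 2m−2} ∈ B and f = {2m−2, 2m−1} ∉ B. Let φ : ZMod (2m−2) → ZMod (2m) be the map sending the residue of a (0 ≤ a ≤ 2m−3) to the residue of a. Then the set B' = {{a, b} : a, b ∈ ZMod (2m−2), a ≠ b, {φ(a), φ(b)} ∈ B} equals the φ-preimage of B \ {e}, has exactly m−1 edges, and is a blocker in CK(2m−2) (it contains an edge of every SPM of CK(2m−2)). -/

import Mathlib

def inArc (n : ℕ) (a b z : ZMod n) : Prop :=
  0 < (z - a).val ∧ (z - a).val < (b - a).val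

def Cross (n : ℕ) (e f : Sym2 (ZMod n)) : Prop :=
  ∃ a b c d : ZMod n, e = s(a, b) ∧ f = s(c, d) ∧
    a ≠ b ∧ a ≠ c ∧ a ≠ d ∧ b ≠ c ∧ b ≠ d ∧ c ≠ d ∧
    Xor' (inArc n a b c) (inArc n a b d)

def IsSPM (m : ℕ) (M : Finset (Sym2 (ZMod (2 * m)))) : Prop :=
  M.card = m ∧
  (∀ e ∈ M, ¬ e.IsDiag) ∧
  (∀ v : ZMod (2 * m), ∃! e, e ∈ M ∧ v ∈ e) ∧
  (∀ e ∈ M, ∀ f ∈ M, ¬ Cross (2 * m) e f)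

def IsBlockingSet (m : ℕ) (B : Set (Sym2 (ZMod (2 * m)))) : Prop :=
  (∀ e ∈ B, ¬ e.IsDiag) ∧
  ∀ M : Finset (Sym2 (ZMod (2 * m))), IsSPM m M → ∃ e ∈ M, e ∈ B

def IsBlocker (m : ℕ) (B : Finset (Sym2 (ZMod (2 * m)))) : Prop :=
  IsBlockingSet m (B : Set (Sym2 (ZMod (2 * m)))) ∧ B.card = m

def IsBoundaryEdge (m : ℕ) (e : Sym2 (ZMod (2 * m))) : Prop :=
  ∃ i : ZMod (2 * m), e = s(i, i + 1)

def edgeOrder {n : ℕ} (e : Sym2 (ZMod n)) : ℕ :=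
  Sym2.lift ⟨fun i j => min (i - j).val (j - i).val, fun i j => min_comm _ _⟩ e

def edgeSum {n : ℕ} (e : Sym2 (ZMod n)) : ZMod n :=
  Sym2.lift ⟨fun i j => i + j, fun i j => add_comm i j⟩ e
lemma zval_sub {n : ℕ} [NeZero n] (x y : ZMod n) :
    (x - y).val = if y.val ≤ x.val then x.val - y.val else n - (y.val - x.val) := by
  have hn : 0 < n := NeZero.pos n
  have hx : ((x.val : ℕ) : ZMod n) = x := ZMod.natCast_rightInverse x
  have hy : ((y.val : ℕ) : ZMod n) = y := ZMod.natCast_rightInverse y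
  rcases le_or_gt y.val x.val with h | h
  · rw [if_pos h]
    have hxy : x - y = ((x.val - y.val : ℕ) : ZMod n) := by
      rw [Nat.cast_sub h, hx, hy]
    rw [hxy, ZMod.val_cast_of_lt (lt_of_le_of_lt (Nat.sub_le _ _) (ZMod.val_lt x))]
  · rw [if_neg (not_le.mpr h)]
    have hd : y.val - x.val < n := lt_of_le_of_lt (Nat.sub_le _ _) (ZMod.val_lt y)
    have hxy : x - y = ((n - (y.val - x.val) : ℕ) : ZMod n) := by
      rw [Nat.cast_sub hd.le, Nat.cast_sub h.le, ZMod.natCast_self, hx, hy]; ring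
    rw [hxy, ZMod.val_cast_of_lt (by omega)]

lemma cross_irrefl {n : ℕ} (e : Sym2 (ZMod n)) : ¬ Cross n e e := by
  rintro ⟨a, b, c, d, h1, h2, hab, hac, had, hbc, hbd, hcd, _⟩
  rw [h1, Sym2.eq_iff] at h2
  tauto

lemma not_cross_of_iff {n : ℕ} {e f : Sym2 (ZMod n)} {C D : ZMod n} (hfCD : f = s(C, D))
    (h : ∀ A B : ZMod n, e = s(A, B) → A ≠ B → A ≠ C → A ≠ D → B ≠ C → B ≠ D →
      (inArc n A B C ↔ inArc n A B D)) : ¬ Cross n e f := by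
  rintro ⟨a, b, c, d, h1, h2, hab, hac, had, hbc, hbd, hcd, hx⟩
  rw [hfCD, Sym2.eq_iff] at h2
  rcases h2 with ⟨rfl, rfl⟩ | ⟨rfl, rfl⟩
  · have := h a b h1 hab hac had hbc hbd
    rcases hx with ⟨p, q⟩ | ⟨p, q⟩
    · exact q (this.mp p)
    · exact q (this.mpr p)
  · have := h a b h1 hab had hac hbd hbc
    rcases hx with ⟨p, q⟩ | ⟨p, q⟩
    · exact q (this.mpr p)
    · exact q (this.mp p)

lemma inArc_transfer {n N : ℕ} (hn : 0 < n) (hN : N = n + 2)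
    (ψ : ZMod n → ZMod N) (hψ : ∀ x : ZMod n, (ψ x).val = x.val)
    (a b z : ZMod n) : inArc N (ψ a) (ψ b) (ψ z) ↔ inArc n a b z := by
  haveI : NeZero n := ⟨by omega⟩
  haveI : NeZero N := ⟨by omega⟩
  have ha := ZMod.val_lt a
  have hb := ZMod.val_lt b
  have hz := ZMod.val_lt z
  simp only [inArc, zval_sub, hψ]
  split_ifs <;> omega

lemma map_rep {α β : Type*} {φ : α → β} {z : Sym2 α} {A B : β}
    (h : Sym2.map φ z = s(A, B)) : ∃ a b, z = s(a, b) ∧ A = φ a ∧ B = φ b := by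
  induction z using Sym2.ind with
  | _ x y =>
    rw [Sym2.map_pair_eq, Sym2.eq_iff] at h
    rcases h with ⟨h1, h2⟩ | ⟨h1, h2⟩
    · exact ⟨x, y, rfl, h1.symm, h2.symm⟩
    · exact ⟨y, x, Sym2.eq_swap.symm, h2.symm, h1.symm⟩

lemma map_isDiag {α β : Type*} (φ : α → β) {z : Sym2 α} (h : z.IsDiag) :
    (Sym2.map φ z).IsDiag := by
  induction z using Sym2.ind with
  | _ x y =>
    rw [Sym2.mk_isDiag_iff] at h
    rw [Sym2.map_pair_eq, Sym2.mk_isDiag_iff, h]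

def Pmat (p : ℕ) (a : ZMod (2 * p)) : Finset (Sym2 (ZMod (2 * p))) :=
  (Finset.range p).image fun t : ℕ => s(a + (t : ZMod (2 * p)), a - 1 - (t : ZMod (2 * p)))

lemma pmat_isSPM (p : ℕ) (hp : 1 ≤ p) (a : ZMod (2 * p)) : IsSPM p (Pmat p a) := by
  haveI : NeZero (2 * p) := ⟨by omega⟩
  have hcast : ∀ w : ℕ, w < 2 * p → ((w : ℕ) : ZMod (2 * p)).val = w :=
    fun w h => ZMod.val_cast_of_lt h
  have hzero : ∀ w : ℕ, w < 4 * p → ((w : ℕ) : ZMod (2 * p)) = 0 → w = 0 ∨ w = 2 * p := by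
    intro w hw h
    rcases lt_or_ge w (2 * p) with h1 | h1
    · left
      have := hcast w h1
      rw [h, ZMod.val_zero] at this
      omega
    · right
      have h2 : ((w - 2 * p : ℕ) : ZMod (2 * p)) = 0 := by
        rw [Nat.cast_sub h1, ZMod.natCast_self, h]; ring
      have := hcast (w - 2 * p) (by omega)
      rw [h2, ZMod.val_zero] at this
      omega
  have hinj : ∀ t u : ℕ, t < p → u < p →
      s(a + (t : ZMod (2*p)), a - 1 - (t : ZMod (2*p))) =
      s(a + (u : ZMod (2*p)), a - 1 - (u : ZMod (2*p))) → t = u := by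
    intro t u ht hu h
    rw [Sym2.eq_iff] at h
    rcases h with ⟨h1, _⟩ | ⟨h1, _⟩
    · have h2 : ((t : ℕ) : ZMod (2*p)) = ((u : ℕ) : ZMod (2*p)) := by
        linear_combination h1
      have := congrArg ZMod.val h2
      rw [hcast t (by omega), hcast u (by omega)] at this
      exact this
    · exfalso
      have h3 : ((t + u + 1 : ℕ) : ZMod (2*p)) = 0 := by push_cast; linear_combination h1
      rcases hzero _ (by omega) h3 with h4 | h4 <;> omega
  refine ⟨?_, ?_, ?_, ?_⟩
  · rw [Pmat, Finset.card_image_of_injOn, Finset.card_range]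
    intro t ht u hu h
    simp only [Finset.coe_range, Set.mem_Iio] at ht hu
    exact hinj t u ht hu h
  · intro e he
    obtain ⟨t, ht, rfl⟩ := Finset.mem_image.mp he
    rw [Finset.mem_range] at ht
    rw [Sym2.mk_isDiag_iff]
    intro h
    have h3 : ((2 * t + 1 : ℕ) : ZMod (2*p)) = 0 := by push_cast; linear_combination h
    rcases hzero _ (by omega) h3 with h4 | h4 <;> omega
  · intro v
    set d := (v - a).val with hdd
    have hdlt : d < 2 * p := ZMod.val_lt _
    have hv : v = a + ((d : ℕ) : ZMod (2 * p)) := by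
      rw [hdd, ZMod.natCast_val, ZMod.cast_id]; ring
    rcases lt_or_ge d p with hc | hc
    · refine ⟨s(a + (d : ZMod (2*p)), a - 1 - (d : ZMod (2*p))),
        ⟨Finset.mem_image.mpr ⟨d, Finset.mem_range.mpr hc, rfl⟩, Sym2.mem_iff.mpr (Or.inl hv)⟩, ?_⟩
      rintro e' ⟨he', hve'⟩
      obtain ⟨u, hu, rfl⟩ := Finset.mem_image.mp he'
      rw [Finset.mem_range] at hu
      rcases Sym2.mem_iff.mp hve' with h1 | h1
      · have h2 : ((u : ℕ) : ZMod (2*p)) = ((d : ℕ) : ZMod (2*p)) := by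
          linear_combination h1.symm.trans hv
        have := congrArg ZMod.val h2
        rw [hcast u (by omega), hcast d (by omega)] at this
        rw [this]
      · exfalso
        have h3 : ((d + u + 1 : ℕ) : ZMod (2*p)) = 0 := by
          push_cast; linear_combination hv.symm.trans h1
        rcases hzero _ (by omega) h3 with h4 | h4 <;> omega
    · have ht0 : 2 * p - 1 - d < p := by omega
      have hkey : a - 1 - ((2 * p - 1 - d : ℕ) : ZMod (2*p)) = a + ((d : ℕ) : ZMod (2*p)) := by
        have hnat : 2 * p - 1 - d = 2 * p - (d + 1) := by omega
        rw [hnat, Nat.cast_sub (by omega : d + 1 ≤ 2 * p), ZMod.natCast_self]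
        push_cast
        ring
      refine ⟨s(a + ((2 * p - 1 - d : ℕ) : ZMod (2*p)), a - 1 - ((2 * p - 1 - d : ℕ) : ZMod (2*p))),
        ⟨Finset.mem_image.mpr ⟨_, Finset.mem_range.mpr ht0, rfl⟩,
         Sym2.mem_iff.mpr (Or.inr (by rw [hv, ← hkey]))⟩, ?_⟩
      rintro e' ⟨he', hve'⟩
      obtain ⟨u, hu, rfl⟩ := Finset.mem_image.mp he'
      rw [Finset.mem_range] at hu
      rcases Sym2.mem_iff.mp hve' with h1 | h1
      · exfalso
        have h2 : ((u : ℕ) : ZMod (2*p)) = ((d : ℕ) : ZMod (2*p)) := by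
          linear_combination h1.symm.trans hv
        have := congrArg ZMod.val h2
        rw [hcast u (by omega), hcast d (by omega)] at this
        omega
      · have h3 : ((d + u + 1 : ℕ) : ZMod (2*p)) = 0 := by
          push_cast; linear_combination hv.symm.trans h1
        have hud : u = 2 * p - 1 - d := by
          rcases hzero _ (by omega) h3 with h4 | h4 <;> omega
        rw [hud]
  · intro e he f hf
    obtain ⟨t, ht, rfl⟩ := Finset.mem_image.mp he
    obtain ⟨u, hu, rfl⟩ := Finset.mem_image.mp hf
    rw [Finset.mem_range] at ht hu
    apply not_cross_of_iff rfl
    intro A B hAB hABne hAC hAD hBC hBD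
    have v1 : (a + (u : ZMod (2*p)) - (a + (t : ZMod (2*p)))).val =
        if t ≤ u then u - t else 2 * p - (t - u) := by
      rw [show a + (u : ZMod (2*p)) - (a + (t : ZMod (2*p))) =
        (u : ZMod (2*p)) - (t : ZMod (2*p)) from by ring, zval_sub,
        hcast u (by omega), hcast t (by omega)]
    have v2 : (a - 1 - (u : ZMod (2*p)) - (a + (t : ZMod (2*p)))).val = 2 * p - (t + u + 1) := by
      rw [show a - 1 - (u : ZMod (2*p)) - (a + (t : ZMod (2*p))) =
        (0 : ZMod (2*p)) - ((t + u + 1 : ℕ) : ZMod (2*p)) from by push_cast; ring, zval_sub,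
        ZMod.val_zero, hcast (t + u + 1) (by omega), if_neg (by omega)]
      omega
    have v3 : (a - 1 - (t : ZMod (2*p)) - (a + (t : ZMod (2*p)))).val = 2 * p - (2 * t + 1) := by
      rw [show a - 1 - (t : ZMod (2*p)) - (a + (t : ZMod (2*p))) =
        (0 : ZMod (2*p)) - ((2 * t + 1 : ℕ) : ZMod (2*p)) from by push_cast; ring, zval_sub,
        ZMod.val_zero, hcast (2 * t + 1) (by omega), if_neg (by omega)]
      omega
    have v4 : (a + (u : ZMod (2*p)) - (a - 1 - (t : ZMod (2*p)))).val = t + u + 1 := by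
      rw [show a + (u : ZMod (2*p)) - (a - 1 - (t : ZMod (2*p))) =
        ((t + u + 1 : ℕ) : ZMod (2*p)) from by push_cast; ring, hcast (t + u + 1) (by omega)]
    have v5 : (a - 1 - (u : ZMod (2*p)) - (a - 1 - (t : ZMod (2*p)))).val =
        if u ≤ t then t - u else 2 * p - (u - t) := by
      rw [show a - 1 - (u : ZMod (2*p)) - (a - 1 - (t : ZMod (2*p))) =
        (t : ZMod (2*p)) - (u : ZMod (2*p)) from by ring, zval_sub,
        hcast t (by omega), hcast u (by omega)]
    have v6 : (a + (t : ZMod (2*p)) - (a - 1 - (t : ZMod (2*p)))).val = 2 * t + 1 := by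
      rw [show a + (t : ZMod (2*p)) - (a - 1 - (t : ZMod (2*p))) =
        ((2 * t + 1 : ℕ) : ZMod (2*p)) from by push_cast; ring, hcast (2 * t + 1) (by omega)]
    rw [Sym2.eq_iff] at hAB
    rcases hAB with ⟨h1, h2⟩ | ⟨h1, h2⟩ <;> subst h1 <;> subst h2
    · simp only [inArc, v1, v2, v3]
      split_ifs <;> omega
    · simp only [inArc, v4, v5, v6]
      split_ifs <;> omega

lemma blocking_lower {p : ℕ} (hp : 1 ≤ p) (B' : Set (Sym2 (ZMod (2 * p))))
    (h : IsBlockingSet p B') : p ≤ B'.ncard := by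
  haveI : NeZero (2 * p) := ⟨by omega⟩
  have hex : ∀ k : Fin p, ∃ g, g ∈ Pmat p (((k : ℕ) + 1 : ℕ) : ZMod (2 * p)) ∧ g ∈ B' := by
    intro k
    obtain ⟨g, hg1, hg2⟩ := h.2 (Pmat p _) (pmat_isSPM p hp _)
    exact ⟨g, hg1, hg2⟩
  choose g hg1 hg2 using hex
  have hginj : Function.Injective g := by
    intro k k' hkk
    obtain ⟨t, ht, hgt⟩ := Finset.mem_image.mp (hg1 k)
    obtain ⟨u, hu, hgu⟩ := Finset.mem_image.mp (hkk ▸ hg1 k')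
    rw [Finset.mem_range] at ht hu
    have hedge := hgt.trans hgu.symm
    rw [Sym2.eq_iff] at hedge
    have h3 : ((2 * ((k : ℕ) + 1) : ℕ) : ZMod (2 * p)) = ((2 * ((k' : ℕ) + 1) : ℕ) : ZMod (2 * p)) := by
      rcases hedge with ⟨h1, h2⟩ | ⟨h1, h2⟩ <;> push_cast at h1 h2 ⊢ <;>
        linear_combination h1 + h2
    have hcc : ∀ w w' : ℕ, w ≤ w' → w' - w < 2 * p →
        ((w : ℕ) : ZMod (2 * p)) = ((w' : ℕ) : ZMod (2 * p)) → w = w' := by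
      intro w w' hle hlt hc
      have h0 : ((w' - w : ℕ) : ZMod (2 * p)) = 0 := by rw [Nat.cast_sub hle, ← hc]; ring
      have hv := ZMod.val_cast_of_lt hlt
      rw [h0, ZMod.val_zero] at hv
      omega
    have hk := k.isLt
    have hk' := k'.isLt
    have : (k : ℕ) = (k' : ℕ) := by
      rcases le_total (2 * ((k : ℕ) + 1)) (2 * ((k' : ℕ) + 1)) with hle | hle
      · have := hcc _ _ hle (by omega) h3
        omega
      · have := hcc _ _ hle (by omega) h3.symm
        omega
    exact Fin.ext this
  have hSsub : ↑(Finset.univ.image g) ⊆ B' := by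
    intro x hx
    rw [Finset.coe_image] at hx
    obtain ⟨k, _, rfl⟩ := hx
    exact hg2 k
  calc p = (Finset.univ.image g).card := by
        rw [Finset.card_image_of_injective _ hginj, Finset.card_univ, Fintype.card_fin]
    _ = (↑(Finset.univ.image g) : Set _).ncard := (Set.ncard_coe_finset _).symm
    _ ≤ B'.ncard := Set.ncard_le_ncard hSsub (Set.toFinite _)

lemma lift_spm {m : ℕ} (hm : 3 ≤ m) (φ : ZMod (2 * (m - 1)) → ZMod (2 * m))
    (hφv : ∀ a, (φ a).val = a.val)
    (M' : Finset (Sym2 (ZMod (2 * (m - 1))))) (hM' : IsSPM (m - 1) M') :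
    IsSPM m (insert s(((2 * m - 2 : ℕ) : ZMod (2 * m)), ((2 * m - 1 : ℕ) : ZMod (2 * m)))
      (M'.image (Sym2.map φ))) := by
  haveI hNn : NeZero (2 * (m - 1)) := ⟨by omega⟩
  haveI hNN : NeZero (2 * m) := ⟨by omega⟩
  set P : ZMod (2 * m) := ((2 * m - 2 : ℕ) : ZMod (2 * m)) with hPdef
  set Q : ZMod (2 * m) := ((2 * m - 1 : ℕ) : ZMod (2 * m)) with hQdef
  have hP : P.val = 2 * (m - 1) := by
    rw [hPdef, ZMod.val_cast_of_lt (by omega)]; omega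
  have hQ : Q.val = 2 * (m - 1) + 1 := by
    rw [hQdef, ZMod.val_cast_of_lt (by omega)]; omega
  have hvinj : ∀ x y : ZMod (2 * (m - 1)), x.val = y.val → x = y := by
    intro x y h
    rw [← ZMod.natCast_rightInverse x, ← ZMod.natCast_rightInverse y, h]
  have hvinjN : ∀ x y : ZMod (2 * m), x.val = y.val → x = y := by
    intro x y h
    rw [← ZMod.natCast_rightInverse x, ← ZMod.natCast_rightInverse y, h]
  have hφinj : Function.Injective φ := by
    intro x y h
    exact hvinj x y (by rw [← hφv x, ← hφv y, h])
  have hvert : ∀ (e' : Sym2 (ZMod (2 * (m - 1)))) (w : ZMod (2 * m)),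
      w ∈ Sym2.map φ e' → w.val < 2 * (m - 1) := by
    intro e' w hw
    obtain ⟨x, _, rfl⟩ := Sym2.mem_map.mp hw
    rw [hφv x]
    exact ZMod.val_lt x
  have hPQ : P ≠ Q := by
    intro h
    have := congrArg ZMod.val h
    omega
  have hfnotim : s(P, Q) ∉ M'.image (Sym2.map φ) := by
    intro h
    obtain ⟨e', _, hfe⟩ := Finset.mem_image.mp h
    have : P ∈ Sym2.map φ e' := by rw [hfe]; exact Sym2.mem_iff.mpr (Or.inl rfl)
    have := hvert e' P this
    omega
  obtain ⟨hcard', hnd', hcov', hnc'⟩ := hM'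
  refine ⟨?_, ?_, ?_, ?_⟩
  · rw [Finset.card_insert_of_notMem hfnotim,
      Finset.card_image_of_injective _ (Sym2.map.injective hφinj), hcard']
    omega
  · intro e he
    rcases Finset.mem_insert.mp he with rfl | him
    · rw [Sym2.mk_isDiag_iff]; exact hPQ
    · obtain ⟨e', he', rfl⟩ := Finset.mem_image.mp him
      intro hd
      induction e' using Sym2.ind with
      | _ x y =>
        rw [Sym2.map_pair_eq, Sym2.mk_isDiag_iff] at hd
        exact hnd' _ he' (Sym2.mk_isDiag_iff.mpr (hφinj hd))
  · intro v
    have hvN : v.val < 2 * m := ZMod.val_lt v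
    rcases lt_or_ge v.val (2 * (m - 1)) with hvn | hvn
    · set z : ZMod (2 * (m - 1)) := ((v.val : ℕ) : ZMod (2 * (m - 1))) with hzdef
      have hz : z.val = v.val := ZMod.val_cast_of_lt hvn
      have hφz : φ z = v := hvinjN _ _ (by rw [hφv, hz])
      obtain ⟨e', ⟨he'M, hze'⟩, huniq⟩ := hcov' z
      refine ⟨Sym2.map φ e', ⟨Finset.mem_insert_of_mem (Finset.mem_image_of_mem _ he'M),
        Sym2.mem_map.mpr ⟨z, hze', hφz⟩⟩, ?_⟩
      rintro g ⟨hgM, hvg⟩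
      rcases Finset.mem_insert.mp hgM with rfl | hgim
      · exfalso
        rcases Sym2.mem_iff.mp hvg with rfl | rfl <;> omega
      · obtain ⟨e'', he''M, rfl⟩ := Finset.mem_image.mp hgim
        obtain ⟨x, hxe'', hφx⟩ := Sym2.mem_map.mp hvg
        have hxz : x = z := hvinj _ _ (by rw [← hφv x, hφx, hz])
        rw [huniq e'' ⟨he''M, hxz ▸ hxe''⟩]
    · have hvPQ : v = P ∨ v = Q := by
        rcases (by omega : v.val = 2 * m - 2 ∨ v.val = 2 * m - 1) with h | h
        · exact Or.inl (hvinjN v P (by omega))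
        · exact Or.inr (hvinjN v Q (by omega))
      refine ⟨s(P, Q), ⟨Finset.mem_insert_self _ _, ?_⟩, ?_⟩
      · rcases hvPQ with rfl | rfl
        · exact Sym2.mem_iff.mpr (Or.inl rfl)
        · exact Sym2.mem_iff.mpr (Or.inr rfl)
      · rintro g ⟨hgM, hvg⟩
        rcases Finset.mem_insert.mp hgM with rfl | hgim
        · rfl
        · exfalso
          obtain ⟨e'', _, rfl⟩ := Finset.mem_image.mp hgim
          have := hvert e'' v hvg
          omega
  · have hmix1 : ∀ A B : ZMod (2 * m), A.val < 2 * (m - 1) → B.val < 2 * (m - 1) →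
        (inArc (2 * m) A B P ↔ inArc (2 * m) A B Q) := by
      intro A B hA hB
      simp only [inArc, zval_sub, hP, hQ]
      split_ifs <;> omega
    have hmix2 : ∀ Z W : ZMod (2 * m), Z.val < 2 * (m - 1) → W.val < 2 * (m - 1) →
        (inArc (2 * m) P Q Z ↔ inArc (2 * m) P Q W) := by
      intro Z W hZ hW
      simp only [inArc, zval_sub, hP, hQ]
      split_ifs <;> omega
    have hmix3 : ∀ Z W : ZMod (2 * m), Z.val < 2 * (m - 1) → W.val < 2 * (m - 1) →
        (inArc (2 * m) Q P Z ↔ inArc (2 * m) Q P W) := by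
      intro Z W hZ hW
      simp only [inArc, zval_sub, hP, hQ]
      split_ifs <;> omega
    intro e he f hf
    rcases Finset.mem_insert.mp he with rfl | heim
    · rcases Finset.mem_insert.mp hf with rfl | hfim
      · exact cross_irrefl _
      · obtain ⟨e2, he2, rfl⟩ := Finset.mem_image.mp hfim
        induction e2 using Sym2.ind with
        | _ x y =>
          rw [Sym2.map_pair_eq]
          apply not_cross_of_iff rfl
          intro A B hAB _ _ _ _ _
          rw [Sym2.eq_iff] at hAB
          have hx := hφv x ▸ ZMod.val_lt x
          have hy := hφv y ▸ ZMod.val_lt y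
          rcases hAB with ⟨h1, h2⟩ | ⟨h1, h2⟩ <;> subst h1 <;> subst h2
          · exact hmix2 _ _ hx hy
          · exact hmix3 _ _ hx hy
    · obtain ⟨e1, he1, rfl⟩ := Finset.mem_image.mp heim
      rcases Finset.mem_insert.mp hf with rfl | hfim
      · apply not_cross_of_iff rfl
        intro A B hAB _ _ _ _ _
        obtain ⟨a0, b0, _, rfl, rfl⟩ := map_rep hAB
        exact hmix1 _ _ (hφv a0 ▸ ZMod.val_lt a0) (hφv b0 ▸ ZMod.val_lt b0)
      · obtain ⟨e2, he2, rfl⟩ := Finset.mem_image.mp hfim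
        rintro ⟨A, B, C, D, h1, h2, hAB, hAC, hAD, hBC, hBD, hCD, hx⟩
        obtain ⟨a0, b0, he1r, rfl, rfl⟩ := map_rep h1
        obtain ⟨c0, d0, he2r, rfl, rfl⟩ := map_rep h2
        have htr := inArc_transfer (n := 2 * (m - 1)) (N := 2 * m) (by omega) (by omega) φ hφv
        apply hnc' e1 he1 e2 he2
        refine ⟨a0, b0, c0, d0, he1r, he2r,
          fun h => hAB (congrArg φ h), fun h => hAC (congrArg φ h),
          fun h => hAD (congrArg φ h), fun h => hBC (congrArg φ h),
          fun h => hBD (congrArg φ h), fun h => hCD (congrArg φ h), ?_⟩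
        rcases hx with ⟨hp1, hp2⟩ | ⟨hp1, hp2⟩
        · exact Or.inl ⟨(htr a0 b0 c0).mp hp1, fun hh => hp2 ((htr a0 b0 d0).mpr hh)⟩
        · exact Or.inr ⟨(htr a0 b0 d0).mp hp1, fun hh => hp2 ((htr a0 b0 c0).mpr hh)⟩

theorem induced_blocker (m : ℕ) (hm : 3 ≤ m)
    (B : Finset (Sym2 (ZMod (2 * m)))) (hB : IsBlocker m B)
    (he : s(((2 * m - 3 : ℕ) : ZMod (2 * m)), ((2 * m - 2 : ℕ) : ZMod (2 * m))) ∈ B)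
    (hf : s(((2 * m - 2 : ℕ) : ZMod (2 * m)), ((2 * m - 1 : ℕ) : ZMod (2 * m))) ∉ B)
    (φ : ZMod (2 * (m - 1)) → ZMod (2 * m)) (hφ : ∀ a, φ a = (a.val : ZMod (2 * m))) :
    {e' : Sym2 (ZMod (2 * (m - 1))) | ¬ e'.IsDiag ∧ Sym2.map φ e' ∈ B} =
      Sym2.map φ ⁻¹' ((B : Set (Sym2 (ZMod (2 * m)))) \
        {s(((2 * m - 3 : ℕ) : ZMod (2 * m)), ((2 * m - 2 : ℕ) : ZMod (2 * m)))}) ∧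
    {e' : Sym2 (ZMod (2 * (m - 1))) | ¬ e'.IsDiag ∧ Sym2.map φ e' ∈ B}.ncard = m - 1 ∧
    IsBlockingSet (m - 1)
      {e' : Sym2 (ZMod (2 * (m - 1))) | ¬ e'.IsDiag ∧ Sym2.map φ e' ∈ B} := by
  haveI hNn : NeZero (2 * (m - 1)) := ⟨by omega⟩
  haveI hNN : NeZero (2 * m) := ⟨by omega⟩
  have hφv : ∀ a : ZMod (2 * (m - 1)), (φ a).val = a.val := by
    intro a
    rw [hφ]
    exact ZMod.val_cast_of_lt (lt_of_lt_of_le (ZMod.val_lt a) (by omega))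
  have hφinj : Function.Injective φ := by
    intro x y h
    have hv := congrArg ZMod.val h
    rw [hφv, hφv] at hv
    rw [← ZMod.natCast_rightInverse x, ← ZMod.natCast_rightInverse y, hv]
  have hvertlt : ∀ (e' : Sym2 (ZMod (2 * (m - 1)))) (w : ZMod (2 * m)),
      w ∈ Sym2.map φ e' → w.val < 2 * (m - 1) := by
    intro e' w hw
    obtain ⟨x, _, rfl⟩ := Sym2.mem_map.mp hw
    rw [hφv x]
    exact ZMod.val_lt x
  set e0 := s(((2 * m - 3 : ℕ) : ZMod (2 * m)), ((2 * m - 2 : ℕ) : ZMod (2 * m))) with he0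
  set B' := {e' : Sym2 (ZMod (2 * (m - 1))) | ¬ e'.IsDiag ∧ Sym2.map φ e' ∈ B} with hB'def
  have part1 : B' = Sym2.map φ ⁻¹' ((B : Set (Sym2 (ZMod (2 * m)))) \ {e0}) := by
    ext e'
    simp only [hB'def, Set.mem_setOf_eq, Set.mem_preimage, Set.mem_diff, Finset.mem_coe,
      Set.mem_singleton_iff]
    constructor
    · rintro ⟨hnd, hmem⟩
      refine ⟨hmem, fun hEq => ?_⟩
      have hPm : ((2 * m - 2 : ℕ) : ZMod (2 * m)) ∈ Sym2.map φ e' := by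
        rw [hEq, he0]
        exact Sym2.mem_iff.mpr (Or.inr rfl)
      have hlt := hvertlt e' _ hPm
      rw [ZMod.val_cast_of_lt (by omega)] at hlt
      omega
    · rintro ⟨hmem, _⟩
      exact ⟨fun hd => hB.1.1 _ (Finset.mem_coe.mpr hmem) (map_isDiag φ hd), hmem⟩
  have part3 : IsBlockingSet (m - 1) B' := by
    constructor
    · rintro e' he'
      exact he'.1
    · intro M' hM'
      obtain ⟨g, hgM, hgB⟩ := hB.1.2 _ (lift_spm hm φ hφv M' hM')
      rcases Finset.mem_insert.mp hgM with rfl | hgim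
      · exact absurd (Finset.mem_coe.mp hgB) hf
      · obtain ⟨e', he'M, rfl⟩ := Finset.mem_image.mp hgim
        exact ⟨e', he'M, hM'.2.1 e' he'M, Finset.mem_coe.mp hgB⟩
  have part2 : B'.ncard = m - 1 := by
    have hub : B'.ncard ≤ m - 1 := by
      have himg : Sym2.map φ '' B' ⊆ (B : Set (Sym2 (ZMod (2 * m)))) \ {e0} := by
        rw [part1]
        exact Set.image_preimage_subset _ _
      calc B'.ncard = (Sym2.map φ '' B').ncard :=
            (Set.ncard_image_of_injective _ (Sym2.map.injective hφinj)).symm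
        _ ≤ ((B : Set (Sym2 (ZMod (2 * m)))) \ {e0}).ncard :=
            Set.ncard_le_ncard himg (Set.toFinite _)
        _ = m - 1 := by
            rw [Set.ncard_diff_singleton_of_mem (Finset.mem_coe.mpr he),
              Set.ncard_coe_finset, hB.2]
    have hlb := blocking_lower (by omega : 1 ≤ m - 1) B' part3
    omega
  exact ⟨part1, part2, part3⟩
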